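/- Let G be a fork-free graph containing an induced copy of one of the graphs H_1,...,H_5, and let v be a vertex with H an induced subgraph of G restricted to the non-neighbours of v (excluding v). If W is a maximal set of vertices in V \setminus N[v] satisfying: V(H) \subseteq W, G[W] is connected, the complement of G[W] is connected, Z (the neighbours of v complete to H) is complete to W, and Y = N(v) \setminus Z is anticomplete to W; and if some vertex u \notin W \cup {v} distinguishes W with u non-adjacent to v, and u has a non-neighbour z \in Z, then G contains an induced fork. (Key claim within the proof of Theorem 4 of the paper: Z must be complete to W \cup {u}.) -/
import Mathlib


/-- The fork: the 5-vertex tree obtained from the claw `K_{1,3}` by subdividing one edge.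
Vertex `1` is adjacent to `0, 2, 3`, and `3` is adjacent to `4`. -/
def forkGraph : SimpleGraph (Fin 5) :=
  SimpleGraph.fromRel (fun a b => (a, b) ∈ ([(0,1),(1,2),(1,3),(3,4)] : List (Fin 5 × Fin 5)))

/-- The graph `H₁` of Lozin–Milanič (Fig. 8). -/
def LMH₁ : SimpleGraph (Fin 6) :=
  SimpleGraph.fromRel (fun a b =>
    (a, b) ∈ ([(0,2),(2,4),(2,3),(0,1),(1,3),(3,5),(5,4)] : List (Fin 6 × Fin 6)))

/-- The graph `H₂` of Lozin–Milanič. -/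
def LMH₂ : SimpleGraph (Fin 6) :=
  SimpleGraph.fromRel (fun a b =>
    (a, b) ∈ ([(0,2),(2,4),(2,3),(0,1),(1,3),(3,5),(5,4),(1,5)] : List (Fin 6 × Fin 6)))

/-- The graph `H₃` of Lozin–Milanič. -/
def LMH₃ : SimpleGraph (Fin 6) :=
  SimpleGraph.fromRel (fun a b =>
    (a, b) ∈ ([(0,2),(2,4),(2,3),(0,1),(1,3),(3,5),(5,4),(1,2)] : List (Fin 6 × Fin 6)))

/-- The graph `H₄` of Lozin–Milanič. -/
def LMH₄ : SimpleGraph (Fin 6) :=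
  SimpleGraph.fromRel (fun a b =>
    (a, b) ∈ ([(0,2),(2,4),(2,3),(0,1),(1,3),(3,5),(5,4),(1,5),(1,2)] : List (Fin 6 × Fin 6)))

/-- The graph `H₅` of Lozin–Milanič. -/
def LMH₅ : SimpleGraph (Fin 7) :=
  SimpleGraph.fromRel (fun a b =>
    (a, b) ∈ ([(0,2),(2,4),(2,3),(0,1),(1,3),(3,5),(5,4),(1,5),(1,2),(1,6),(6,5),(5,2)] :
      List (Fin 7 × Fin 7)))

/-- `s` is the vertex set of an induced copy of one of `H₁, …, H₅` in `G`. -/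
def IsOneOfH {V : Type*} (G : SimpleGraph V) (s : Set V) : Prop :=
  (∃ φ : LMH₁ ↪g G, Set.range φ = s) ∨ (∃ φ : LMH₂ ↪g G, Set.range φ = s) ∨
  (∃ φ : LMH₃ ↪g G, Set.range φ = s) ∨ (∃ φ : LMH₄ ↪g G, Set.range φ = s) ∨
  (∃ φ : LMH₅ ↪g G, Set.range φ = s)


instance : DecidableRel forkGraph.Adj := fun a b =>
  decidable_of_iff
    (a ≠ b ∧ (((a, b) ∈ ([(0,1),(1,2),(1,3),(3,4)] : List (Fin 5 × Fin 5))) ∨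
      ((b, a) ∈ ([(0,1),(1,2),(1,3),(3,4)] : List (Fin 5 × Fin 5)))))
    (by rw [forkGraph, SimpleGraph.fromRel_adj])

private lemma fork_frontier_aux {α : Type*} (H : SimpleGraph α) (P : α → Prop) :
    ∀ {a b : α}, H.Walk a b → P a → ¬P b → ∃ x y, H.Adj x y ∧ P x ∧ ¬P y := by
  intro a b p
  induction p with
  | nil => intro ha hb; exact absurd ha hb
  | @cons a c b h' p ih =>
    intro ha hb
    by_cases hc : P c
    · exact ih hc hb
    · exact ⟨a, c, h', ha, hc⟩

/-- Key claim inside the proof of Theorem 4 of the paper. Let `G` be fork-free, `v` a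
vertex, and `s = V(H)` the vertex set of an induced copy of one of `H₁, …, H₅` contained
in the non-neighbours of `v`. Let `W` be a maximal set of non-neighbours of `v` such that
`V(H) ⊆ W`, `G[W]` and its complement are connected, `Z` (the neighbours of `v` complete
to `H`) is complete to `W`, and `Y = N(v) \ Z` is anticomplete to `W`. If some vertex
`u ∉ W ∪ {v}`, non-adjacent to `v`, distinguishes `W` and has a non-neighbour `z ∈ Z`,
then `G` contains an induced fork. -/
theorem fork_from_nonneighbour_in_Z {V : Type*} (G : SimpleGraph V)
    (hfree : IsEmpty (forkGraph ↪g G)) (v : V)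
    (s : Set V) (hs : IsOneOfH G s)
    (hsv : s ⊆ {x | x ≠ v ∧ ¬ G.Adj v x})
    (Z Y : Set V)
    (hZ : Z = {z | G.Adj v z ∧ ∀ x ∈ s, G.Adj z x})
    (hY : Y = G.neighborSet v \ Z)
    (W : Set V)
    (hWv : W ⊆ {x | x ≠ v ∧ ¬ G.Adj v x})
    (hW1 : s ⊆ W)
    (hW2 : (G.induce W).Connected)
    (hW3 : ((G.induce W)ᶜ).Connected)
    (hW4 : ∀ z ∈ Z, ∀ x ∈ W, G.Adj z x)
    (hW5 : ∀ y ∈ Y, ∀ x ∈ W, ¬ G.Adj y x)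
    (hWmax : ∀ W' : Set V, W ⊆ W' → W' ⊆ {x | x ≠ v ∧ ¬ G.Adj v x} → s ⊆ W' →
      (G.induce W').Connected → ((G.induce W')ᶜ).Connected →
      (∀ z ∈ Z, ∀ x ∈ W', G.Adj z x) → (∀ y ∈ Y, ∀ x ∈ W', ¬ G.Adj y x) → W' = W)
    (u : V) (hu : u ∉ W) (huv : u ≠ v) (huvadj : ¬ G.Adj u v)
    (hdist : (∃ x ∈ W, G.Adj u x) ∧ (∃ x ∈ W, ¬ G.Adj u x))
    (z : V) (hz : z ∈ Z) (huz : ¬ G.Adj u z) :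
    Nonempty (forkGraph ↪g G) := by
  obtain ⟨⟨w1, hw1W, hw1⟩, ⟨w2, hw2W, hw2⟩⟩ := hdist
  obtain ⟨p⟩ := hW3.preconnected ⟨w1, hw1W⟩ ⟨w2, hw2W⟩
  obtain ⟨x', t', hadj, hx, ht⟩ :=
    fork_frontier_aux ((G.induce W)ᶜ) (fun a => G.Adj u ↑a) p hw1 hw2
  simp only [SimpleGraph.compl_adj, SimpleGraph.comap_adj] at hadj
  have hxt : ¬ G.Adj ↑x' ↑t' := hadj.2
  have hvz : G.Adj v z := by rw [hZ] at hz; exact hz.1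
  have hzx : G.Adj z ↑x' := hW4 z hz _ x'.2
  have hzt : G.Adj z ↑t' := hW4 z hz _ t'.2
  have hvx : ¬ G.Adj v ↑x' := (hWv x'.2).2
  have hvt : ¬ G.Adj v ↑t' := (hWv t'.2).2
  have hvu : ¬ G.Adj v u := fun h => huvadj h.symm
  have hzu : ¬ G.Adj z u := fun h => huz h.symm
  have hxu : G.Adj ↑x' u := hx.symm
  have htu : ¬ G.Adj ↑t' u := fun h => ht h.symm
  have nvz : v ≠ z := hvz.ne
  have nvx : v ≠ (x' : V) := fun h => (hWv x'.2).1 h.symm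
  have nvt : v ≠ (t' : V) := fun h => (hWv t'.2).1 h.symm
  have nvu : v ≠ u := fun h => huv h.symm
  have nzx : z ≠ (x' : V) := hzx.ne
  have nzt : z ≠ (t' : V) := hzt.ne
  have nzu : z ≠ u := fun h => hvu (h ▸ hvz)
  have nxt : (x' : V) ≠ (t' : V) := fun h => hadj.1 (Subtype.ext h)
  have nxu : (x' : V) ≠ u := fun h => hu (h ▸ x'.2)
  have ntu : (t' : V) ≠ u := fun h => hu (h ▸ t'.2)
  refine ⟨⟨⟨![v, z, ↑t', ↑x', u], ?_⟩, ?_⟩⟩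
  · intro a b hab
    fin_cases a <;> fin_cases b <;> simp at hab ⊢ <;>
      first
        | rfl
        | exact absurd hab nvz | exact absurd hab.symm nvz
        | exact absurd hab nvx | exact absurd hab.symm nvx
        | exact absurd hab nvt | exact absurd hab.symm nvt
        | exact absurd hab nvu | exact absurd hab.symm nvu
        | exact absurd hab nzx | exact absurd hab.symm nzx
        | exact absurd hab nzt | exact absurd hab.symm nzt
        | exact absurd hab nzu | exact absurd hab.symm nzu
        | exact absurd hab nxt | exact absurd hab.symm nxt
        | exact absurd hab nxu | exact absurd hab.symm nxu
        | exact absurd hab ntu | exact absurd hab.symm ntu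
  · intro a b
    fin_cases a <;> fin_cases b <;>
      simp only [Function.Embedding.coeFn_mk, Matrix.cons_val_zero, Matrix.cons_val_one,
        Matrix.head_cons, Matrix.cons_val_two, Matrix.tail_cons, Matrix.cons_val_three,
        Matrix.cons_val_four, Matrix.cons_val_fin_one] <;>
    first
      | exact iff_of_false (G.irrefl) (by decide)
      | exact iff_of_true hvz (by decide)
      | exact iff_of_true hvz.symm (by decide)
      | exact iff_of_true hzt (by decide)
      | exact iff_of_true hzt.symm (by decide)
      | exact iff_of_true hzx (by decide)
      | exact iff_of_true hzx.symm (by decide)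
      | exact iff_of_true hxu (by decide)
      | exact iff_of_true hxu.symm (by decide)
      | exact iff_of_false hvt (by decide)
      | exact iff_of_false (fun h => hvt h.symm) (by decide)
      | exact iff_of_false hvx (by decide)
      | exact iff_of_false (fun h => hvx h.symm) (by decide)
      | exact iff_of_false hvu (by decide)
      | exact iff_of_false (fun h => hvu h.symm) (by decide)
      | exact iff_of_false hzu (by decide)
      | exact iff_of_false (fun h => hzu h.symm) (by decide)
      | exact iff_of_false hxt (by decide)
      | exact iff_of_false (fun h => hxt h.symm) (by decide)
      | exact iff_of_false htu (by decide)
      | exact iff_of_false (fun h => htu h.symm) (by decide)
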